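/- Let f be an assignment of items to bins for a TBPP instance. If for every item j the capacity constraint holds at the starting time s_j (i.e., for every bin i, the total weight of items k with f(k)=i that are active at time s_j is at most W), then the capacity constraint holds at every time instant τ (for every bin i, the total weight of items assigned to i that are active at τ is at most W). Consequently, an assignment is feasible if and only if it is feasible at the n starting times of the items. -/
import Mathlib


open Finset

/-- For a TBPP instance, an assignment `f` of items to bins satisfies the
capacity constraint at every time instant `τ` if and only if it satisfies it at the
`n` starting times `s j` of the items. -/
theorem tbpp_feasible_iff_feasible_at_starting_times
    {n : ℕ} {I : Type*} [DecidableEq I]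
    (W : ℤ) (hW : 0 < W)
    (w : Fin n → ℤ) (hw : ∀ j, 0 < w j ∧ w j ≤ W)
    (s t : Fin n → ℕ) (hst : ∀ j, s j < t j)
    (f : Fin n → I) :
    (∀ τ : ℕ, ∀ i : I,
        ∑ k ∈ univ.filter
          (fun k => f k = i ∧ s k ≤ τ ∧ τ < t k), w k ≤ W)
      ↔
    (∀ j : Fin n, ∀ i : I,
        ∑ k ∈ univ.filter
          (fun k => f k = i ∧ s k ≤ s j ∧ s j < t k), w k ≤ W) := by
  constructor
  · intro h j i; exact h (s j) i
  · intro h τ i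
    set A := univ.filter (fun k => f k = i ∧ s k ≤ τ ∧ τ < t k) with hA
    rcases A.eq_empty_or_nonempty with he | hne
    · rw [he]; simpa using hW.le
    · obtain ⟨j, hjA, hjmax⟩ := A.exists_max_image s hne
      have hj := mem_filter.mp hjA
      have hsub : A ⊆ univ.filter (fun k => f k = i ∧ s k ≤ s j ∧ s j < t k) := by
        intro k hk
        have hk' := mem_filter.mp hk
        refine mem_filter.mpr ⟨mem_univ k, hk'.2.1, hjmax k hk, ?_⟩
        exact lt_of_le_of_lt hj.2.2.1 hk'.2.2.2
      calc ∑ k ∈ A, w k ≤ ∑ k ∈ univ.filter (fun k => f k = i ∧ s k ≤ s j ∧ s j < t k), w k :=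
            Finset.sum_le_sum_of_subset_of_nonneg hsub (fun k _ _ => (hw k).1.le)
        _ ≤ W := h j i
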